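/- Let q be a prime power, let K be a finite field with q elements, let L be a field extension of K of degree n, let d be a divisor of n, and let k ≥ 1. Then Σ_{β} ( Σ_{s | n} μ̂(n/s)·(q^s − 1)·δ[β^{(q^n−1)/(q^s−1)} = 1] )^k = Σ_{c | d} μ̂(d/c) · C_{n,k,c}(q), where the outer sum on the left is over all β ∈ Lˣ with [K(β) : K] = d, δ[P] is 1 if P holds and 0 otherwise, μ̂ is the Möbius function, and C_{n,k,c}(q) = Σ_{s_1,…,s_k | n} (q^n − 1) · ∏_{i=1}^{k} [ (q^{s_i} − 1) μ̂(n/s_i) ] / lcm( (q^n − 1)/(q^c − 1), q^{s_1} − 1, …, q^{s_k} − 1 ), the sum being over all k-tuples of divisors of n and the lcm computed in the integers. -/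

import Mathlib

/-- `C_{n,k,c}(q)`, where the sum ranges over all `k`-tuples of divisors of `n` and the lcm
is computed in the integers. -/
def Crat (n k c Q : ℕ) : ℚ :=
  ∑ s : Fin k → {x // x ∈ n.divisors},
    ((Q : ℚ) ^ n - 1) *
        (∏ i, (((Q : ℚ) ^ ((s i : ℕ)) - 1) *
          ((ArithmeticFunction.moebius (n / (s i : ℕ))) : ℚ))) /
      (((List.ofFn fun i => Q ^ ((s i : ℕ)) - 1).foldr Nat.lcm
          ((Q ^ n - 1) / (Q ^ c - 1)) : ℕ) : ℚ)

lemma aux_pow_sub_one_dvd {q a b : ℕ} (h : a ∣ b) : q ^ a - 1 ∣ q ^ b - 1 := by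
  obtain ⟨m, rfl⟩ := h
  rw [pow_mul]
  simpa using Nat.sub_dvd_pow_sub_pow (q ^ a) 1 m


lemma aux_div_mul_div (N a : ℕ) (l : ℕ) (hal : a ∣ l) (hl : l ∣ N) (hl0 : 0 < l) :
    N / a = N / l * (l / a) := by
  rw [Nat.div_mul_div_comm hl hal, mul_comm N l, Nat.mul_div_mul_left _ _ hl0]

lemma aux_gcd_div (N a b : ℕ) (ha : a ∣ N) (hb : b ∣ N) (hN : N ≠ 0) :
    Nat.gcd (N / a) (N / b) = N / Nat.lcm a b := by
  have ha0 : 0 < a := Nat.pos_of_dvd_of_pos ha (Nat.pos_of_ne_zero hN)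
  have hb0 : 0 < b := Nat.pos_of_dvd_of_pos hb (Nat.pos_of_ne_zero hN)
  have hg0 : 0 < Nat.gcd a b := Nat.gcd_pos_of_pos_left _ ha0
  have hl : Nat.lcm a b ∣ N := Nat.lcm_dvd ha hb
  have hl0 : 0 < Nat.lcm a b := Nat.pos_of_dvd_of_pos hl (Nat.pos_of_ne_zero hN)
  have h1 : N / a = N / Nat.lcm a b * (Nat.lcm a b / a) :=
    aux_div_mul_div N a _ (Nat.dvd_lcm_left a b) hl hl0
  have h2 : N / b = N / Nat.lcm a b * (Nat.lcm a b / b) :=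
    aux_div_mul_div N b _ (Nat.dvd_lcm_right a b) hl hl0
  have key1 : Nat.lcm a b / a = b / Nat.gcd a b := by
    rw [Nat.lcm, Nat.div_div_eq_div_mul, mul_comm a b,
      Nat.mul_div_mul_right _ _ ha0]
  have key2 : Nat.lcm a b / b = a / Nat.gcd a b := by
    rw [Nat.lcm, Nat.div_div_eq_div_mul,
      Nat.mul_div_mul_right _ _ hb0]
  have hcop : Nat.Coprime (Nat.lcm a b / a) (Nat.lcm a b / b) := by
    rw [key1, key2]
    have := Nat.coprime_div_gcd_div_gcd (m := b) (n := a) (by rwa [Nat.gcd_comm])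
    rwa [Nat.gcd_comm b a] at this
  rw [h1, h2, Nat.gcd_mul_left, hcop, mul_one]

lemma aux_div_dvd_div {N a b : ℕ} (hab : a ∣ b) (hb : b ∣ N) (hb0 : 0 < b) :
    N / b ∣ N / a :=
  Dvd.intro _ (aux_div_mul_div N a b hab hb hb0).symm

section
variable {L : Type} [Field L] [Fintype L] [DecidableEq L]

lemma aux_card_pow_eq_one {e : ℕ} (he : e ∣ Fintype.card Lˣ) :
    (Finset.univ.filter (fun u : Lˣ => u ^ e = 1)).card = e := by
  have hN0 : Fintype.card Lˣ ≠ 0 := Fintype.card_ne_zero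
  have he0 : 0 < e := Nat.pos_of_dvd_of_pos he (Nat.pos_of_ne_zero hN0)
  refine le_antisymm (IsCyclic.card_pow_eq_one_le he0) ?_
  obtain ⟨g, hg⟩ := IsCyclic.exists_generator (α := Lˣ)
  have horder : orderOf g = Fintype.card Lˣ := by
    rw [orderOf_eq_card_of_forall_mem_zpowers hg, Nat.card_eq_fintype_card]
  set a := g ^ (Fintype.card Lˣ / e) with ha
  have horda : orderOf a = e := by
    rw [ha, orderOf_pow, horder,
      Nat.gcd_eq_right (Nat.div_dvd_of_dvd he), Nat.div_div_self he hN0]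
  refine Finset.le_card_of_inj_on_range (fun i => a ^ i) (fun i _ => ?_) (fun i hi j hj hij => ?_)
  · simp only [Finset.mem_filter, Finset.mem_univ, true_and]
    rw [← pow_mul, mul_comm, pow_mul, ← horda, pow_orderOf_eq_one, one_pow]
  · exact pow_injOn_Iio_orderOf (by simpa [horda] using hi) (by simpa [horda] using hj) hij

lemma aux_merge (β : Lˣ) {a b : ℕ} (ha : a ∣ Fintype.card Lˣ) (hb : b ∣ Fintype.card Lˣ) :
    (β ^ (Fintype.card Lˣ / a) = 1 ∧ β ^ (Fintype.card Lˣ / b) = 1) ↔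
      β ^ (Fintype.card Lˣ / Nat.lcm a b) = 1 := by
  have hN0 : Fintype.card Lˣ ≠ 0 := Fintype.card_ne_zero
  have hl : Nat.lcm a b ∣ Fintype.card Lˣ := Nat.lcm_dvd ha hb
  have hl0 : 0 < Nat.lcm a b := Nat.pos_of_dvd_of_pos hl (Nat.pos_of_ne_zero hN0)
  constructor
  · rintro ⟨h1, h2⟩
    have : orderOf β ∣ Nat.gcd (Fintype.card Lˣ / a) (Fintype.card Lˣ / b) :=
      Nat.dvd_gcd (orderOf_dvd_of_pow_eq_one h1) (orderOf_dvd_of_pow_eq_one h2)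
    rw [aux_gcd_div _ _ _ ha hb hN0] at this
    exact orderOf_dvd_iff_pow_eq_one.mp this
  · intro h
    constructor
    · obtain ⟨m, hm⟩ := aux_div_dvd_div (Nat.dvd_lcm_left a b) hl hl0
      rw [hm, pow_mul, h, one_pow]
    · obtain ⟨m, hm⟩ := aux_div_dvd_div (Nat.dvd_lcm_right a b) hl hl0
      rw [hm, pow_mul, h, one_pow]

lemma aux_foldr_dvd (l : List ℕ) (a N : ℕ) (ha : a ∣ N) (hl : ∀ t ∈ l, t ∣ N) :
    l.foldr Nat.lcm a ∣ N := by
  induction l with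
  | nil => exact ha
  | cons u l ih =>
    exact Nat.lcm_dvd (hl u (List.mem_cons_self))
      (ih (fun t' h => hl t' (List.mem_cons_of_mem _ h)))

lemma aux_foldr (β : Lˣ) (l : List ℕ) (a : ℕ) (ha : a ∣ Fintype.card Lˣ)
    (hl : ∀ t ∈ l, t ∣ Fintype.card Lˣ) :
    ((β ^ (Fintype.card Lˣ / a) = 1 ∧ ∀ t ∈ l, β ^ (Fintype.card Lˣ / t) = 1) ↔
      β ^ (Fintype.card Lˣ / l.foldr Nat.lcm a) = 1) := by
  induction l with
  | nil => simp
  | cons t l ih =>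
    have hdl : ∀ t' ∈ l, t' ∣ Fintype.card Lˣ := fun t' h => hl t' (List.mem_cons_of_mem _ h)
    have hfold : l.foldr Nat.lcm a ∣ Fintype.card Lˣ := aux_foldr_dvd l a _ ha hdl
    rw [List.foldr_cons, ← aux_merge β (hl t (List.mem_cons_self)) hfold, ← ih hdl]
    simp only [List.mem_cons, forall_eq_or_imp]
    tauto


lemma aux_filter_card {Q : ℕ} (hQ2 : 2 ≤ Q) (hdvd : Q - 1 ∣ Fintype.card Lˣ) :
    (Finset.univ.filter (fun x : L => x ^ Q = x)).card = Q := by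
  have himg : Finset.univ.filter (fun x : L => x ^ Q = x) =
      insert (0 : L) ((Finset.univ.filter (fun u : Lˣ => u ^ (Q - 1) = 1)).image Units.val) := by
    ext x
    simp only [Finset.mem_filter, Finset.mem_univ, true_and, Finset.mem_insert, Finset.mem_image]
    constructor
    · intro hx
      rcases eq_or_ne x 0 with h0 | h0
      · exact Or.inl h0
      · refine Or.inr ⟨Units.mk0 x h0, Units.ext ?_, rfl⟩
        have hx' : x ^ (Q - 1) * x = 1 * x := by
          rw [one_mul, ← pow_succ, show Q - 1 + 1 = Q from by omega]
          exact hx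
        have := mul_right_cancel₀ h0 hx'
        simpa using this
    · rintro (rfl | ⟨u, hu, rfl⟩)
      · exact zero_pow (by omega)
      · have h1 : ((u : L)) ^ (Q - 1) = 1 := by
          have := congrArg Units.val hu
          simpa using this
        calc (u : L) ^ Q = (u : L) ^ (Q - 1 + 1) := by rw [show Q - 1 + 1 = Q from by omega]
        _ = (u : L) := by rw [pow_succ, h1, one_mul]
  rw [himg, Finset.card_insert_of_notMem, Finset.card_image_of_injective _ Units.val_injective,
    aux_card_pow_eq_one hdvd]
  · omega
  · intro hmem
    obtain ⟨u, -, hu⟩ := Finset.mem_image.mp hmem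
    exact Units.ne_zero u hu

end

lemma aux_deg_iff (n : ℕ) (hn : 1 ≤ n) (K L : Type) [Field K] [Fintype K] [Field L] [Fintype L]
    [DecidableEq L] [Algebra K L] (hdim : Module.finrank K L = n) (β : Lˣ) (c : ℕ) (hc : c ∣ n) :
    β ^ (Fintype.card K ^ c - 1) = 1 ↔
      Module.finrank K (IntermediateField.adjoin K {(β : L)}) ∣ c := by
  set q := Fintype.card K with hqdef
  have hq : 1 < q := Fintype.one_lt_card
  have hc0 : c ≠ 0 := by rintro rfl; rw [Nat.zero_dvd] at hc; omega
  have hqc : 2 ≤ q ^ c := by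
    calc 2 ≤ q := hq
    _ = q ^ 1 := (pow_one q).symm
    _ ≤ q ^ c := Nat.pow_le_pow_right (by omega) (by omega)
  have hcardL : Fintype.card L = q ^ n := by rw [← hdim]; exact Module.card_eq_pow_finrank
  have hcardU : Fintype.card Lˣ = q ^ n - 1 := by rw [Fintype.card_units, hcardL]
  have hQcdvd : q ^ c - 1 ∣ Fintype.card Lˣ := by rw [hcardU]; exact aux_pow_sub_one_dvd hc
  constructor
  · intro hpow
    set p := ringChar K with hpdef
    haveI hpK : CharP K p := ringChar.charP K
    have hp : p.Prime := CharP.char_is_prime K p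
    haveI : CharP L p := charP_of_injective_algebraMap (algebraMap K L).injective p
    haveI : Fact p.Prime := ⟨hp⟩
    obtain ⟨r, -, hqr⟩ := FiniteField.card K p
    have hpow_eq : p ^ ((r : ℕ) * c) = q ^ c := by rw [pow_mul, ← hqr]
    set φ : L →+* L := iterateFrobenius L p ((r : ℕ) * c) with hφ
    have hmem : ∀ x : L, x ∈ RingHom.eqLocusField φ (RingHom.id L) ↔ x ^ q ^ c = x := by
      intro x
      show φ x = x ↔ _
      rw [hφ, iterateFrobenius_def, hpow_eq]
    set S : IntermediateField K L := Subfield.toIntermediateField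
      (RingHom.eqLocusField φ (RingHom.id L)) (fun x => by
        rw [hmem, ← map_pow, FiniteField.pow_card_pow]) with hS
    have hmemS : ∀ x : L, x ∈ S ↔ x ^ q ^ c = x := hmem
    have hβS : (β : L) ∈ S := by
      rw [hmemS]
      have h1 : (β : L) ^ (q ^ c - 1) = 1 := by
        have := congrArg Units.val hpow
        simpa using this
      calc (β : L) ^ q ^ c = (β : L) ^ (q ^ c - 1 + 1) := by
            rw [show q ^ c - 1 + 1 = q ^ c from by omega]
      _ = (β : L) := by rw [pow_succ, h1, one_mul]
    haveI : Fintype S := Fintype.ofFinite S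
    have hScard : Fintype.card S = q ^ c := by
      have hequiv : Fintype.card S = Fintype.card {x : L // x ^ q ^ c = x} :=
        Fintype.card_congr (Equiv.subtypeEquivRight hmemS)
      rw [hequiv, Fintype.card_subtype]
      exact aux_filter_card hqc hQcdvd
    have hrank : Module.finrank K S = c := by
      have h := Module.card_eq_pow_finrank (K := K) (V := S)
      rw [hScard] at h
      exact Nat.pow_right_injective hq h.symm
    have hint : IsIntegral K (β : L) := IsIntegral.of_finite K _
    have hDdeg : Module.finrank K (IntermediateField.adjoin K {(β : L)}) =
        (minpoly K (β : L)).natDegree := IntermediateField.adjoin.finrank hint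
    set x' : S := ⟨(β : L), hβS⟩ with hx'
    have hx'min : minpoly K (β : L) = minpoly K x' := by
      have := minpoly.algHom_eq S.val (S.val.injective) x'
      simpa using this
    have hdvd : (minpoly K x').natDegree ∣ Module.finrank K S :=
      minpoly.degree_dvd (IsIntegral.of_finite K x')
    rw [hDdeg, hx'min, ← hrank]
    exact hdvd
  · intro hDc
    set E := IntermediateField.adjoin K {(β : L)} with hE
    haveI : Fintype E := Fintype.ofFinite E
    have hβE : (β : L) ∈ E := IntermediateField.mem_adjoin_simple_self K (β : L)
    set x' : E := ⟨(β : L), hβE⟩ with hx'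
    have hx0 : x' ≠ 0 := by
      intro h
      exact Units.ne_zero β (congrArg Subtype.val h)
    have h1 : x' ^ (Fintype.card E - 1) = 1 := FiniteField.pow_card_sub_one_eq_one x' hx0
    have hcardE : Fintype.card E = q ^ Module.finrank K E := Module.card_eq_pow_finrank
    have h2 : (β : L) ^ (q ^ Module.finrank K E - 1) = 1 := by
      rw [hcardE] at h1
      have := congrArg Subtype.val h1
      simpa using this
    have hu : β ^ (q ^ Module.finrank K E - 1) = 1 := by
      apply Units.ext
      simpa using h2
    obtain ⟨m, hm⟩ := aux_pow_sub_one_dvd (q := q) hDc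
    rw [hm, pow_mul, hu, one_pow]

/-- Corollary 4.8 of the paper (element-level form): for a finite field `K` with `q` elements,
a degree-`n` extension `L/K`, a divisor `d` of `n` and `k ≥ 1`,
`Σ_β (Σ_{s∣n} μ̂(n/s)(q^s-1)δ[β^{(q^n-1)/(q^s-1)} = 1])^k = Σ_{c∣d} μ̂(d/c)·C_{n,k,c}(q)`,
the outer sum ranging over β ∈ Lˣ of degree `d` over `K`. -/
theorem character_sum_power_formula
    (n d k : ℕ) (hn : 1 ≤ n) (hk : 1 ≤ k) (hd : d ∣ n)
    (K L : Type) [Field K] [Fintype K] [Field L] [Fintype L] [DecidableEq L]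
    [Algebra K L] (hdim : Module.finrank K L = n) :
    (∑ β : Lˣ,
        if Module.finrank K (IntermediateField.adjoin K {(β : L)}) = d
        then (∑ s ∈ n.divisors,
            ((ArithmeticFunction.moebius (n / s)) : ℚ) * ((Fintype.card K : ℚ) ^ s - 1) *
              (if β ^ ((Fintype.card K ^ n - 1) / (Fintype.card K ^ s - 1)) = 1
                then 1 else 0)) ^ k
        else 0)
      = ∑ c ∈ d.divisors,
          ((ArithmeticFunction.moebius (d / c)) : ℚ) * Crat n k c (Fintype.card K) := by
  set q := Fintype.card K with hqdef
  have hq : 1 < q := Fintype.one_lt_card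
  have hd0 : 0 < d := Nat.pos_of_dvd_of_pos hd (by omega)
  have hcardL : Fintype.card L = q ^ n := by rw [← hdim]; exact Module.card_eq_pow_finrank
  have hcardU : Fintype.card Lˣ = q ^ n - 1 := by rw [Fintype.card_units, hcardL]
  have hqn : 2 ≤ q ^ n := by
    calc 2 ≤ q := hq
    _ = q ^ 1 := (pow_one q).symm
    _ ≤ q ^ n := Nat.pow_le_pow_right (by omega) (by omega)
  have hN0 : q ^ n - 1 ≠ 0 := by omega
  set F : Lˣ → ℚ := fun β => ∑ s ∈ n.divisors,
      ((ArithmeticFunction.moebius (n / s)) : ℚ) * ((q : ℚ) ^ s - 1) *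
        (if β ^ ((q ^ n - 1) / (q ^ s - 1)) = 1 then 1 else 0) with hF
  set A : ℕ → ℚ := fun e => ∑ β : Lˣ,
      if Module.finrank K (IntermediateField.adjoin K {(β : L)}) = e then F β ^ k else 0 with hA
  set G : ℕ → ℚ := fun m => ∑ e ∈ m.divisors, A e with hG
  show A d = _
  have hinv : ∑ x ∈ d.divisorsAntidiagonal, ((ArithmeticFunction.moebius x.1 : ℤ) : ℚ) * G x.2
      = A d :=
    ArithmeticFunction.sum_eq_iff_sum_mul_moebius_eq.mp (fun m _ => rfl) d hd0
  rw [← hinv, Nat.sum_divisorsAntidiagonal' (f := fun a b => ((ArithmeticFunction.moebius a : ℤ) : ℚ) * G b)]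
  refine Finset.sum_congr rfl fun c hc => ?_
  have hcd : c ∣ d := (Nat.mem_divisors.mp hc).1
  have hcn : c ∣ n := hcd.trans hd
  have hc0 : c ≠ 0 := by rintro rfl; rw [Nat.zero_dvd] at hcd; omega
  have hqc : 2 ≤ q ^ c := by
    calc 2 ≤ q := hq
    _ = q ^ 1 := (pow_one q).symm
    _ ≤ q ^ c := Nat.pow_le_pow_right (by omega) (by omega)
  have hQcdvd : q ^ c - 1 ∣ q ^ n - 1 := aux_pow_sub_one_dvd hcn
  congr 1
  -- goal : G c = Crat n k c q
  have step1 : G c = ∑ β : Lˣ, if β ^ (q ^ c - 1) = 1 then F β ^ k else 0 := by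
    rw [hG]
    simp only [hA]
    rw [Finset.sum_comm]
    refine Finset.sum_congr rfl fun β _ => ?_
    rw [Finset.sum_ite_eq c.divisors
      (Module.finrank K (IntermediateField.adjoin K {(β : L)})) (fun _ => F β ^ k)]
    refine if_congr ?_ rfl rfl
    rw [Nat.mem_divisors]
    rw [← aux_deg_iff n hn K L hdim β c hcn]
    exact ⟨fun h => h.1, fun h => ⟨h, hc0⟩⟩
  rw [step1]
  -- now the counting computation
  have hFk : ∀ β : Lˣ, F β ^ k = ∑ p : Fin k → {x // x ∈ n.divisors},
      ∏ i, ((ArithmeticFunction.moebius (n / ((p i : ℕ))) : ℚ) * ((q : ℚ) ^ ((p i : ℕ)) - 1) *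
        (if β ^ ((q ^ n - 1) / (q ^ ((p i : ℕ)) - 1)) = 1 then 1 else 0)) := by
    intro β
    rw [hF]
    simp only [← Finset.sum_coe_sort n.divisors]
    rw [Fintype.sum_pow]
  have hstep : (∑ β : Lˣ, if β ^ (q ^ c - 1) = 1 then F β ^ k else 0)
      = ∑ β : Lˣ, ∑ p : Fin k → {x // x ∈ n.divisors},
          (if β ^ (q ^ c - 1) = 1 then (1 : ℚ) else 0) *
            ∏ i, ((ArithmeticFunction.moebius (n / ((p i : ℕ))) : ℚ) *
              ((q : ℚ) ^ ((p i : ℕ)) - 1) *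
              (if β ^ ((q ^ n - 1) / (q ^ ((p i : ℕ)) - 1)) = 1 then 1 else 0)) :=
    Finset.sum_congr rfl fun β _ => by rw [← boole_mul, hFk β, Finset.mul_sum]
  rw [hstep, Finset.sum_comm, Crat]
  refine Finset.sum_congr rfl fun p _ => ?_
  set l := List.ofFn (fun i : Fin k => q ^ ((p i : ℕ)) - 1) with hl
  set a := (q ^ n - 1) / (q ^ c - 1) with ha'
  set Dl := l.foldr Nat.lcm a with hDl
  have hadvd : a ∣ Fintype.card Lˣ := by
    rw [hcardU]; exact Nat.div_dvd_of_dvd hQcdvd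
  have hldvd : ∀ t ∈ l, t ∣ Fintype.card Lˣ := by
    intro t ht
    rw [hl, List.mem_ofFn] at ht
    obtain ⟨i, rfl⟩ := ht
    rw [hcardU]
    exact aux_pow_sub_one_dvd (Nat.mem_divisors.mp (p i).2).1
  have hDdvd : Dl ∣ Fintype.card Lˣ := aux_foldr_dvd l a _ hadvd hldvd
  have hDdvd' : Dl ∣ q ^ n - 1 := by rwa [hcardU] at hDdvd
  have hD0 : Dl ≠ 0 := by
    intro h
    rw [h] at hDdvd'
    exact hN0 (Nat.eq_zero_of_zero_dvd hDdvd')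
  have hiff : ∀ β : Lˣ, (β ^ (q ^ c - 1) = 1 ∧
        ∀ i : Fin k, β ^ ((q ^ n - 1) / (q ^ ((p i : ℕ)) - 1)) = 1)
      ↔ β ^ (Fintype.card Lˣ / Dl) = 1 := by
    intro β
    rw [← aux_foldr β l a hadvd hldvd]
    have e0 : Fintype.card Lˣ / a = q ^ c - 1 := by
      rw [hcardU, ha']; exact Nat.div_div_self hQcdvd hN0
    rw [e0]
    refine and_congr Iff.rfl ?_
    rw [hl]
    simp only [List.forall_mem_ofFn_iff, hcardU]
  have hterm : ∀ β : Lˣ, (if β ^ (q ^ c - 1) = 1 then (1 : ℚ) else 0) *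
        ∏ i, ((ArithmeticFunction.moebius (n / ((p i : ℕ))) : ℚ) *
          ((q : ℚ) ^ ((p i : ℕ)) - 1) *
          (if β ^ ((q ^ n - 1) / (q ^ ((p i : ℕ)) - 1)) = 1 then 1 else 0))
      = (∏ i, ((ArithmeticFunction.moebius (n / ((p i : ℕ))) : ℚ) *
          ((q : ℚ) ^ ((p i : ℕ)) - 1))) *
          (if β ^ (Fintype.card Lˣ / Dl) = 1 then 1 else 0) := by
    intro β
    rw [Finset.prod_mul_distrib, Finset.prod_boole]
    by_cases hC : β ^ (Fintype.card Lˣ / Dl) = 1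
    · have h2 := (hiff β).mpr hC
      rw [if_pos h2.1, if_pos (fun i _ => h2.2 i), if_pos hC]
      ring
    · by_cases hA : β ^ (q ^ c - 1) = 1
      · have hB : ¬ (∀ i ∈ Finset.univ, β ^ ((q ^ n - 1) / (q ^ ((p i : ℕ)) - 1)) = 1) :=
          fun hB => hC ((hiff β).mp ⟨hA, fun i => hB i (Finset.mem_univ i)⟩)
        rw [if_pos hA, if_neg hB, if_neg hC]
        ring
      · rw [if_neg hA, if_neg hC]
        ring
  rw [Finset.sum_congr rfl (fun β _ => hterm β), ← Finset.mul_sum, Finset.sum_boole,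
    aux_card_pow_eq_one (Nat.div_dvd_of_dvd hDdvd), hcardU,
    Nat.cast_div hDdvd' (by exact_mod_cast hD0),
    Nat.cast_sub (by omega), Nat.cast_pow, Nat.cast_one]
  rw [show (∏ i, (((q : ℚ)) ^ ((p i : ℕ)) - 1) * ((ArithmeticFunction.moebius (n / ((p i : ℕ)))) : ℚ))
      = ∏ i, ((ArithmeticFunction.moebius (n / ((p i : ℕ))) : ℚ) * (((q : ℚ)) ^ ((p i : ℕ)) - 1))
    from Finset.prod_congr rfl fun i _ => mul_comm _ _]
  ring
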